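/- Let k ≥ 3 be an integer, and let t = a^k b (the word consisting of k copies of a letter a followed by one copy of a distinct letter b). Then every finite simple graph is t-representable. -/

import Mathlib

variable {V : Type*}

/-- The restriction of a word `w` to the letters `x` and `y`. -/
def restrictWord [DecidableEq V] (w : List V) (x y : V) : List V :=
  w.filter fun z => decide (z = x ∨ z = y)

/-- A pattern on two distinct letters `a`, `b` is encoded as a `List Bool`,
where `false` stands for `a` and `true` stands for `b`.  `patternWord t c d` is the word
obtained from the pattern `t` by the substitution `a ↦ c`, `b ↦ d`. -/
def patternWord {α : Type*} (t : List Bool) (c d : α) : List α :=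
  t.map fun b => if b then d else c

/-- `u` contains the pattern `t`: some contiguous factor of `u` is isomorphic to `t`,
i.e. is the image of `t` under an injective substitution of the two letters. -/
def ContainsPattern {α : Type*} (t : List Bool) (u : List α) : Prop :=
  ∃ c d : α, c ≠ d ∧ patternWord t c d <:+: u

/-- `w` `t`-represents the simple graph `G`: every vertex occurs in `w`, and two distinct
vertices `x`, `y` are adjacent iff the restriction of `w` to `{x, y}` avoids the pattern `t`. -/
def TRepresents [DecidableEq V] (t : List Bool) (G : SimpleGraph V) (w : List V) : Prop :=
  (∀ v : V, v ∈ w) ∧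
  ∀ x y : V, x ≠ y → (G.Adj x y ↔ ¬ ContainsPattern t (restrictWord w x y))

/-- `G` is `t`-representable if some word `t`-represents it. -/
def TRepresentable [DecidableEq V] (t : List Bool) (G : SimpleGraph V) : Prop :=
  ∃ w : List V, TRepresents t G w

section Helpers

variable {α : Type*}

/-- A list is `RNice k` if it has length ≥ 2, does not start or end with a doubled
letter, and contains no `k` consecutive equal letters. -/
def RNice (k : ℕ) (u : List α) : Prop :=
  2 ≤ u.length ∧ (∀ c : α, ¬ ([c, c] <+: u)) ∧ (∀ c : α, ¬ ([c, c] <:+ u)) ∧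
    ∀ c : α, ¬ (List.replicate k c <:+: u)

lemma double_infix_replicate {c : α} {n : ℕ} (hn : 2 ≤ n) :
    [c, c] <:+: List.replicate n c := by
  obtain ⟨m, rfl⟩ := Nat.exists_eq_add_of_le hn
  exact ⟨[], List.replicate m c, by simp [List.replicate_add]⟩

lemma rnice_of_nodouble {k : ℕ} (hk : 3 ≤ k) {u : List α} (hl : 2 ≤ u.length)
    (h : ∀ c : α, ¬ ([c, c] <:+: u)) : RNice k u := by
  refine ⟨hl, fun c hc => h c hc.isInfix, fun c hc => h c hc.isInfix, fun c hc => h c ?_⟩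
  exact (double_infix_replicate (by omega)).trans hc

lemma not_double_infix_of_chain' {u : List α} (h : List.Chain' (· ≠ ·) u) (c : α) :
    ¬ ([c, c] <:+: u) := by
  intro hc
  have := h.infix hc
  simp [List.Chain', List.isChain_cons_cons] at this

lemma rnice_of_chain' {k : ℕ} (hk : 3 ≤ k) {u : List α} (hl : 2 ≤ u.length)
    (h : List.Chain' (· ≠ ·) u) : RNice k u :=
  rnice_of_nodouble hk hl (not_double_infix_of_chain' h)

lemma rnice_of_nodup {k : ℕ} (hk : 3 ≤ k) {u : List α} [DecidableEq α] (hl : 2 ≤ u.length)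
    (h : u.Nodup) : RNice k u := by
  refine rnice_of_nodouble hk hl fun c hc => ?_
  have h1 : List.count c [c, c] ≤ List.count c u := hc.sublist.count_le c
  have h2 := List.nodup_iff_count_le_one.1 h c
  simp at h1
  omega

lemma double_prefix_append {u v : List α} {c : α} (hu : 2 ≤ u.length)
    (h : [c, c] <+: u ++ v) : [c, c] <+: u := by
  rcases u with _ | ⟨a, _ | ⟨b, u'⟩⟩
  · simp at hu
  · simp at hu
  · simp only [List.cons_append, List.cons_prefix_cons] at h
    obtain ⟨rfl, rfl, -⟩ := h
    simp [List.cons_prefix_cons]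

lemma replicate_prefix_eq {c : α} {n : ℕ} {a : List α} (h : a <+: List.replicate n c) :
    a = List.replicate a.length c := by
  refine List.eq_replicate_length.2 fun b hb => ?_
  have := h.sublist.subset hb
  exact List.eq_of_mem_replicate this

lemma RNice.append {k : ℕ} (hk : 3 ≤ k) {u v : List α}
    (hu : RNice k u) (hv : RNice k v) : RNice k (u ++ v) := by
  obtain ⟨hul, hup, hus, hur⟩ := hu
  obtain ⟨hvl, hvp, hvs, hvr⟩ := hv
  refine ⟨by simp; omega, ?_, ?_, ?_⟩
  · exact fun c hc => hup c (double_prefix_append hul hc)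
  · intro c hc
    have h' : [c, c] <+: v.reverse ++ u.reverse := by
      have := (List.reverse_prefix (l₁ := [c, c]) (l₂ := u ++ v)).2 hc
      simpa using this
    have := double_prefix_append (by simpa using hvl) h'
    exact hvs c (by simpa using (List.reverse_prefix (l₂ := v)).1 (by simpa using this))
  · rintro c ⟨s, t, hst⟩
    rw [List.append_assoc] at hst
    rcases List.append_eq_append_iff.1 hst with ⟨a, ha, hav⟩ | ⟨c', hc', hcv⟩
    · rcases List.append_eq_append_iff.1 hav.symm with ⟨b, hb, hbt⟩ | ⟨b, hb, hbt⟩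
      · -- replicate k c = a ++ b, u = s ++ a, v = b ++ t
        have hax : a = List.replicate a.length c :=
          replicate_prefix_eq ⟨b, hb.symm⟩
        have hbx : b = List.replicate b.length c := by
          refine List.eq_replicate_length.2 fun z hz => ?_
          have : z ∈ List.replicate k c := by rw [hb]; exact List.mem_append_right a hz
          exact List.eq_of_mem_replicate this
        have hlen : a.length + b.length = k := by
          have := congrArg List.length hb
          simpa using this.symm
        rcases le_or_gt 2 a.length with h2 | h2
        · refine hus c ?_
          have : [c, c] <:+ a := by
            rw [hax]
            obtain ⟨m, hm⟩ : ∃ m, a.length = m + 2 := ⟨a.length - 2, by omega⟩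
            exact ⟨List.replicate m c, by rw [hm, List.replicate_add]; rfl⟩
          exact this.trans ⟨s, ha.symm⟩
        · refine hvp c ?_
          have h2b : 2 ≤ b.length := by omega
          have : [c, c] <+: b := by
            rw [hbx]
            obtain ⟨m, hm⟩ : ∃ m, b.length = 2 + m := ⟨b.length - 2, by omega⟩
            exact ⟨List.replicate m c, by rw [hm, List.replicate_add]; rfl⟩
          exact this.trans ⟨t, by rw [hbt]⟩
      · -- a = replicate k c ++ b, u = s ++ a
        refine hur c ⟨s, b, ?_⟩
        rw [ha, hb]
        simp [List.append_assoc]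
    · -- s = u ++ c', v = c' ++ replicate k c ++ t
      exact hvr c ⟨c', t, by rw [hcv, List.append_assoc]⟩

lemma chain'_ne_cons_flatten {a b : α} (h : a ≠ b) :
    ∀ m : ℕ, List.Chain' (· ≠ ·) (a :: (List.replicate m [b, a]).flatten)
  | 0 => by exact List.isChain_singleton _
  | m + 1 => by
    have ih := chain'_ne_cons_flatten h m
    simp only [List.replicate_succ, List.flatten_cons, List.cons_append, List.nil_append,
      List.Chain', List.isChain_cons_cons]
    exact ⟨h, h.symm, ih⟩

lemma chain'_ne_flatten {a b : α} (h : a ≠ b) (m : ℕ) :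
    List.Chain' (· ≠ ·) ((List.replicate m [a, b]).flatten) := by
  have := chain'_ne_cons_flatten h.symm m
  exact this.tail

lemma flatten_replicate_singleton (m : ℕ) (a : α) :
    (List.replicate m [a]).flatten = List.replicate m a := by
  induction m with
  | zero => simp
  | succ n ih => simp [List.replicate_succ, ih]

/-- Case A piece. -/
lemma rniceA {k m : ℕ} (hk : 3 ≤ k) (hm : 1 ≤ m) {a b : α} (h : a ≠ b) :
    RNice k ((List.replicate m [a, b]).flatten) := by
  refine rnice_of_chain' hk ?_ (chain'_ne_flatten h m)
  have : (List.replicate m [a, b]).flatten.length = 2 * m := by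
    simp [List.length_flatten, List.map_replicate, Nat.mul_comm]
  omega

/-- Case B piece. -/
lemma rniceB {k m : ℕ} (hk : 3 ≤ k) (hm : 1 ≤ m) {a b : α} (h : a ≠ b) :
    RNice k (a :: (List.replicate m [b, a]).flatten) := by
  refine rnice_of_chain' hk ?_ (chain'_ne_cons_flatten h m)
  have : (List.replicate m [b, a]).flatten.length = 2 * m := by
    simp [List.length_flatten, List.map_replicate, Nat.mul_comm]
  simp only [List.length_cons]
  omega

/-- Case C piece. -/
lemma rniceC {k m : ℕ} [DecidableEq α] (hk : 3 ≤ k) (hm : 2 ≤ m) (hmk : m < k) {a b : α}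
    (h : a ≠ b) : RNice k (a :: (List.replicate m b ++ [a])) := by
  have hrev : (a :: (List.replicate m b ++ [a])).reverse = a :: (List.replicate m b ++ [a]) := by
    simp
  have hpre : ∀ c : α, ¬ ([c, c] <+: a :: (List.replicate m b ++ [a])) := by
    intro c hc
    obtain ⟨n, rfl⟩ : ∃ n, m = n + 2 := ⟨m - 2, by omega⟩
    rw [show List.replicate (n + 2) b = b :: List.replicate (n + 1) b from rfl] at hc
    simp only [List.cons_append, List.cons_prefix_cons] at hc
    obtain ⟨rfl, rfl, -⟩ := hc
    exact h rfl
  refine ⟨by simp, hpre, ?_, ?_⟩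
  · intro c hc
    have h2 := List.reverse_prefix.2 hc
    rw [hrev] at h2
    exact hpre c (by simpa using h2)
  · intro c hc
    have h1 : List.count c (List.replicate k c) ≤
        List.count c (a :: (List.replicate m b ++ [a])) := hc.sublist.count_le c
    simp only [List.count_replicate, beq_self_eq_true, if_pos rfl, List.count_cons,
      List.count_append, List.count_singleton] at h1
    by_cases hca : c = a
    · subst hca
      simp [List.count_replicate, (Ne.symm h)] at h1
      omega
    · by_cases hcb : c = b
      · subst hcb
        simp [List.count_replicate, Ne.symm hca] at h1
        omega
      · simp [List.count_replicate, Ne.symm hca, Ne.symm hcb] at h1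
        omega

lemma rnice_append_flatten {k : ℕ} (hk : 3 ≤ k) {b : List α} {L : List (List α)}
    (hb : RNice k b) (hL : ∀ s ∈ L, RNice k s) : RNice k (b ++ L.flatten) := by
  induction L generalizing b with
  | nil => simpa using hb
  | cons s L ih =>
    rw [List.flatten_cons, ← List.append_assoc]
    exact ih (hb.append hk (hL s (by simp))) fun t ht => hL t (by simp [ht])

lemma eq_pair {L : List α} {u v : α} (hnd : L.Nodup) (hu : u ∈ L) (hv : v ∈ L)
    (huv : u ≠ v) (hsub : ∀ z ∈ L, z = u ∨ z = v) : L = [u, v] ∨ L = [v, u] := by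
  rcases L with _ | ⟨a, _ | ⟨b, _ | ⟨c, L'⟩⟩⟩
  · simp at hu
  · simp at hu hv; subst hu; subst hv; exact absurd rfl huv
  · have ha := hsub a (by simp)
    have hb := hsub b (by simp)
    simp at hu hv hnd
    rcases ha with rfl | rfl <;> rcases hb with h | h <;> simp_all
  · have ha := hsub a (by simp)
    have hb := hsub b (by simp)
    have hc := hsub c (by simp)
    simp at hnd
    rcases ha with rfl | rfl <;> rcases hb with rfl | rfl <;> rcases hc with h | h <;> simp_all

lemma filter_eq_singleton {L : List α} [DecidableEq α] {o : α} (hnd : L.Nodup) (ho : o ∈ L) :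
    L.filter (fun z => decide (z = o)) = [o] := by
  induction L with
  | nil => simp at ho
  | cons a L ih =>
    simp at hnd ho
    by_cases hao : a = o
    · subst hao
      have : L.filter (fun z => decide (z = a)) = [] :=
        List.filter_eq_nil_iff.2 fun z hz => by simp; rintro rfl; exact hnd.1 hz
      simp [List.filter_cons, this]
    · rcases ho with rfl | ho
      · exact absurd rfl hao
      · simp [List.filter_cons, hao, ih hnd.2 ho]

lemma two_le_length_of_mem {L : List α} {u v : α} (hu : u ∈ L) (hv : v ∈ L) (huv : u ≠ v) :
    2 ≤ L.length := by
  rcases L with _ | ⟨a, _ | ⟨b, L'⟩⟩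
  · simp at hu
  · simp at hu hv; subst hu; subst hv; exact absurd rfl huv
  · simp

end Helpers

section Gadget

variable {V : Type*} [DecidableEq V]

def gadget (l : List V) (m : ℕ) (x y : V) : List V :=
  [y, x] ++ (List.replicate m ((l.filter fun z => decide (z ≠ x ∧ z ≠ y)) ++ [x])).flatten ++ [y]

lemma restrict_comm (w : List V) (u v : V) : restrictWord w u v = restrictWord w v u := by
  unfold restrictWord
  apply List.filter_congr
  intro z _
  exact decide_eq_decide.2 or_comm

lemma restrict_gadget_eq (l : List V) (m : ℕ) (x y u v : V) :
    restrictWord (gadget l m x y) u v =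
      List.filter (fun z => decide (z = u ∨ z = v)) [y, x] ++
        (List.replicate m
          ((l.filter fun z => decide (z = u ∨ z = v) && decide (z ≠ x ∧ z ≠ y)) ++
            List.filter (fun z => decide (z = u ∨ z = v)) [x])).flatten ++
        List.filter (fun z => decide (z = u ∨ z = v)) [y] := by
  unfold restrictWord gadget
  rw [List.filter_append, List.filter_append, List.filter_flatten, List.map_replicate,
    List.filter_append, List.filter_filter]

lemma gadget_resB {l : List V} (hnd : l.Nodup) (hmem : ∀ z : V, z ∈ l) {m : ℕ} {x y v : V}
    (hxy : x ≠ y) (hxv : x ≠ v) (hyv : y ≠ v) :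
    restrictWord (gadget l m x y) x v = x :: (List.replicate m [v, x]).flatten := by
  rw [restrict_gadget_eq]
  have hinner : (l.filter fun z => decide (z = x ∨ z = v) && decide (z ≠ x ∧ z ≠ y)) =
      l.filter (fun z => decide (z = v)) := by
    apply List.filter_congr
    intro z _
    by_cases hz : z = v
    · subst hz
      simp [Ne.symm hxv, Ne.symm hyv]
    · by_cases hzx : z = x <;> simp [hz, hzx, hxv]
  rw [hinner, filter_eq_singleton hnd (hmem v)]
  simp [Ne.symm hxy, hyv]

lemma gadget_resC {l : List V} (hnd : l.Nodup) (hmem : ∀ z : V, z ∈ l) {m : ℕ} {x y u : V}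
    (hxy : x ≠ y) (hux : u ≠ x) (huy : u ≠ y) :
    restrictWord (gadget l m x y) u y = y :: (List.replicate m u ++ [y]) := by
  rw [restrict_gadget_eq]
  have hinner : (l.filter fun z => decide (z = u ∨ z = y) && decide (z ≠ x ∧ z ≠ y)) =
      l.filter (fun z => decide (z = u)) := by
    apply List.filter_congr
    intro z _
    by_cases hz : z = u
    · subst hz
      simp [hux, huy]
    · by_cases hzy : z = y <;> simp [hz, hzy, Ne.symm huy]
  rw [hinner, filter_eq_singleton hnd (hmem u)]
  simp [Ne.symm hux, hxy, Ne.symm huy, List.flatten_replicate_singleton]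

lemma gadget_resA {l : List V} {m : ℕ} {x y u v : V}
    (hxu : x ≠ u) (hxv : x ≠ v) (hyu : y ≠ u) (hyv : y ≠ v) :
    restrictWord (gadget l m x y) u v =
      (List.replicate m (l.filter fun z => decide (z = u ∨ z = v))).flatten := by
  rw [restrict_gadget_eq]
  have hinner : (l.filter fun z => decide (z = u ∨ z = v) && decide (z ≠ x ∧ z ≠ y)) =
      l.filter (fun z => decide (z = u ∨ z = v)) := by
    apply List.filter_congr
    intro z _
    by_cases hz : z = u ∨ z = v
    · rcases hz with rfl | rfl <;> simp [Ne.symm hxu, Ne.symm hyu, Ne.symm hxv, Ne.symm hyv]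
    · simp [hz]
  rw [hinner]
  simp [hxu, hxv, hyu, hyv]

lemma gadget_res_self {l : List V} {m : ℕ} {x y : V} (hxy : x ≠ y) :
    restrictWord (gadget l m x y) x y = y :: (List.replicate (m + 1) x ++ [y]) := by
  rw [restrict_gadget_eq]
  have hinner : (l.filter fun z => decide (z = x ∨ z = y) && decide (z ≠ x ∧ z ≠ y)) = [] := by
    refine List.filter_eq_nil_iff.2 fun z _ => by simp; tauto
  rw [hinner]
  simp [Ne.symm hxy, hxy, List.flatten_replicate_singleton, List.replicate_succ]

lemma rnice_restrict_gadget {k m : ℕ} (hk : 3 ≤ k) (hmk : m + 1 = k) (hm2 : 2 ≤ m)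
    {l : List V} (hnd : l.Nodup) (hmem : ∀ z : V, z ∈ l) {x y u v : V}
    (hxy : x ≠ y) (huv : u ≠ v)
    (h1 : ¬(x = u ∧ y = v)) (h2 : ¬(x = v ∧ y = u)) :
    RNice k (restrictWord (gadget l m x y) u v) := by
  by_cases hxu : x = u
  · subst hxu
    have hyv : y ≠ v := fun h => h1 ⟨rfl, h⟩
    rw [gadget_resB hnd hmem hxy huv hyv]
    exact rniceB hk (by omega) huv
  · by_cases hxv : x = v
    · subst hxv
      have hyu : y ≠ u := fun h => h2 ⟨rfl, h⟩
      rw [restrict_comm, gadget_resB hnd hmem hxy (Ne.symm huv) hyu]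
      exact rniceB hk (by omega) (Ne.symm huv)
    · by_cases hyu : y = u
      · subst hyu
        rw [restrict_comm, gadget_resC hnd hmem hxy (fun h => hxv h.symm) (Ne.symm huv)]
        exact rniceC hk hm2 (by omega) huv
      · by_cases hyv : y = v
        · subst hyv
          rw [gadget_resC hnd hmem hxy (fun h => hxu h.symm) huv]
          exact rniceC hk hm2 (by omega) (Ne.symm huv)
        · rw [gadget_resA (fun h => hxu h) (fun h => hxv h) hyu hyv]
          set M := l.filter fun z => decide (z = u ∨ z = v) with hM
          have hMnd : M.Nodup := hnd.filter _
          have hMu : u ∈ M := List.mem_filter.2 ⟨hmem u, by simp⟩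
          have hMv : v ∈ M := List.mem_filter.2 ⟨hmem v, by simp⟩
          have hMsub : ∀ z ∈ M, z = u ∨ z = v := fun z hz => by
            have := (List.mem_filter.1 hz).2
            simpa using this
          rcases eq_pair hMnd hMu hMv huv hMsub with h | h <;> rw [h]
          · exact rniceA hk (by omega) huv
          · exact rniceA hk (by omega) (Ne.symm huv)

end Gadget


/-- For an integer `k ≥ 3` and the pattern `t = aᵏ b`,
every finite simple graph is `t`-representable. -/
theorem all_graphs_akb_representable (k : ℕ) (hk : 3 ≤ k)
    {V : Type*} [Fintype V] [DecidableEq V] (G : SimpleGraph V) :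
    TRepresentable (List.replicate k false ++ [true]) G := by
  classical
  obtain ⟨m, rfl⟩ : ∃ m, k = m + 1 := ⟨k - 1, by omega⟩
  have hm2 : 2 ≤ m := by omega
  set l : List V := Finset.univ.toList with hl
  have hnd : l.Nodup := Finset.nodup_toList _
  have hmem : ∀ z : V, z ∈ l := fun z => Finset.mem_toList.2 (Finset.mem_univ z)
  set ne_list : List (V × V) :=
    ((Finset.univ : Finset (V × V)).toList).filter
      (fun e => decide (e.1 ≠ e.2 ∧ ¬ G.Adj e.1 e.2)) with hne
  set w : List V := l ++ (ne_list.map fun e => gadget l m e.1 e.2).flatten with hw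
  have hrw : ∀ x y : V, restrictWord w x y =
      restrictWord l x y ++
        (ne_list.map fun e => restrictWord (gadget l m e.1 e.2) x y).flatten := by
    intro x y
    simp only [hw, restrictWord, List.filter_append, List.filter_flatten, List.map_map,
      Function.comp_def]
  have hcont : ∀ x y : V, x ≠ y → ¬ G.Adj x y →
      ContainsPattern (List.replicate (m + 1) false ++ [true]) (restrictWord w x y) := by
    intro x y hxy hna
    refine ⟨x, y, hxy, ?_⟩
    have hmem_ne : (x, y) ∈ ne_list := by
      rw [hne]
      exact List.mem_filter.2 ⟨Finset.mem_toList.2 (Finset.mem_univ _), by simp [hxy, hna]⟩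
    have hg : restrictWord (gadget l m x y) x y ∈
        ne_list.map fun e => restrictWord (gadget l m e.1 e.2) x y :=
      List.mem_map.2 ⟨(x, y), hmem_ne, rfl⟩
    have hinf : restrictWord (gadget l m x y) x y <:+: restrictWord w x y := by
      rw [hrw x y]
      exact (List.infix_of_mem_flatten hg).trans (List.suffix_append _ _).isInfix
    rw [gadget_res_self hxy] at hinf
    have hpat : patternWord (List.replicate (m + 1) false ++ [true]) x y =
        List.replicate (m + 1) x ++ [y] := by
      simp [patternWord]
    rw [hpat]
    exact (show (List.replicate (m + 1) x ++ [y]) <:+: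
        y :: (List.replicate (m + 1) x ++ [y]) from ⟨[y], [], by simp⟩).trans hinf
  refine ⟨w, fun v => List.mem_append.2 (Or.inl (hmem v)), fun x y hxy => ?_⟩
  constructor
  · rintro hadj ⟨c, d, hcd, hinf⟩
    have hpatc : patternWord (List.replicate (m + 1) false ++ [true]) c d =
        List.replicate (m + 1) c ++ [d] := by
      simp [patternWord]
    rw [hpatc] at hinf
    have hrep : List.replicate (m + 1) c <:+: restrictWord w x y :=
      (List.prefix_append (List.replicate (m + 1) c) [d]).isInfix.trans hinf
    have hnice : RNice (m + 1) (restrictWord w x y) := by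
      rw [hrw x y]
      refine rnice_append_flatten hk ?_ ?_
      · refine rnice_of_nodup hk ?_ (hnd.filter _)
        have hx : x ∈ restrictWord l x y := List.mem_filter.2 ⟨hmem x, by simp⟩
        have hy : y ∈ restrictWord l x y := List.mem_filter.2 ⟨hmem y, by simp⟩
        exact two_le_length_of_mem hx hy hxy
      · intro s hs
        obtain ⟨e, he, rfl⟩ := List.mem_map.1 hs
        have he' : e.1 ≠ e.2 ∧ ¬ G.Adj e.1 e.2 := by
          rw [hne] at he
          simpa using (List.mem_filter.1 he).2
        refine rnice_restrict_gadget hk rfl hm2 hnd hmem he'.1 hxy ?_ ?_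
        · rintro ⟨rfl, rfl⟩; exact he'.2 hadj
        · rintro ⟨rfl, rfl⟩; exact he'.2 hadj.symm
    exact hnice.2.2.2 c hrep
  · intro hnc
    by_contra hna
    exact hnc (hcont x y hxy hna)
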